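/- Complete characterization of consistent cuts by per-stream extents: a set C of events is a consistent cut if and only if there exist integers m_1,…,m_n ∈ {−1,0,…,N} such that C = {(i,t) : 1 ≤ i ≤ n, 0 ≤ t ≤ m_i} and m_i ≥ m_j − ε − 1 for all streams i, j (where m_i = −1 encodes that stream i has no event in C). -/
import Mathlib


/-- An event is a pair (stream index, timestamp), with streams `Fin n` and
timestamps `Fin (N+1)` (i.e. `{0,…,N}`). The generating relation `R` with
clock-skew bound `ε`: same-stream order, and cross-stream order with skew. -/
def genR (n N ε : ℕ) (e f : Fin n × Fin (N + 1)) : Prop :=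
  (e.1 = f.1 ∧ e.2 < f.2) ∨ (e.2 : ℕ) + ε < (f.2 : ℕ)

/-- The happened-before relation `⇝` with skew `ε`: transitive closure of `R`. -/
def hb (n N ε : ℕ) : Fin n × Fin (N + 1) → Fin n × Fin (N + 1) → Prop :=
  Relation.TransGen (genR n N ε)

/-- A consistent cut: a set `C` of events such that `e ∈ C` and `f ⇝ e` imply `f ∈ C`. -/
def ConsistentCut (n N ε : ℕ) (C : Set (Fin n × Fin (N + 1))) : Prop :=
  ∀ e ∈ C, ∀ f, hb n N ε f e → f ∈ C

/-- complete characterization of consistent cuts by per-stream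
extents: `C` is a consistent cut iff there exist `m_1,…,m_n ∈ {−1,…,N}` with
`C = {(i,t) : t ≤ m_i}` and `m_i ≥ m_j − ε − 1` for all streams `i, j`
(`m_i = −1` encodes that stream `i` has no event in `C`). -/
theorem cut_characterization (n N ε : ℕ) (hn : 1 ≤ n) (hε : 1 ≤ ε)
    (C : Set (Fin n × Fin (N + 1))) :
    ConsistentCut n N ε C ↔
      ∃ m : Fin n → ℤ,
        (∀ i, -1 ≤ m i ∧ m i ≤ (N : ℤ)) ∧
        (∀ i j, m j - (ε : ℤ) - 1 ≤ m i) ∧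
        (∀ (i : Fin n) (t : Fin (N + 1)), (i, t) ∈ C ↔ (t : ℤ) ≤ m i) := by
  constructor
  · intro hC
    classical
    have down : ∀ (i : Fin n) (t t' : Fin (N+1)), (i, t') ∈ C → t ≤ t' → (i, t) ∈ C := by
      intro i t t' h hle
      rcases eq_or_lt_of_le hle with rfl | hlt
      · exact h
      · exact hC _ h _ (Relation.TransGen.single (Or.inl ⟨rfl, hlt⟩))
    set S : Fin n → Finset (Fin (N+1)) := fun i => Finset.univ.filter (fun t => (i, t) ∈ C)
      with hS
    set M : Fin n → ℤ := fun i => if h : (S i).Nonempty then (((S i).max' h : ℕ) : ℤ) else -1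
      with hM
    have hmemM : ∀ (i : Fin n) (t : Fin (N+1)), (i, t) ∈ C ↔ (t : ℤ) ≤ M i := by
      intro i t
      by_cases h : (S i).Nonempty
      · simp only [hM, dif_pos h]
        constructor
        · intro hc
          have ht : t ∈ S i := by simp [hS, hc]
          exact_mod_cast Fin.le_def.mp (Finset.le_max' _ _ ht)
        · intro hle
          have hmx : (S i).max' h ∈ S i := Finset.max'_mem _ _
          have hmxC : (i, (S i).max' h) ∈ C := by simpa [hS] using hmx
          exact down i t _ hmxC (Fin.le_def.mpr (by exact_mod_cast hle))
      · simp only [hM, dif_neg h]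
        constructor
        · intro hc
          exact absurd ⟨t, by simp [hS, hc]⟩ h
        · intro hle
          have : (0 : ℤ) ≤ (t : ℤ) := Int.ofNat_nonneg _
          omega
    have hMbd : ∀ i, -1 ≤ M i ∧ M i ≤ (N : ℤ) := by
      intro i
      by_cases h : (S i).Nonempty
      · simp only [hM, dif_pos h]
        have := ((S i).max' h).is_le
        omega
      · simp only [hM, dif_neg h]
        constructor <;> omega
    refine ⟨M, hMbd, ?_, hmemM⟩
    intro i j
    by_cases hle : M j ≤ (ε : ℤ)
    · have := (hMbd i).1
      omega
    · push_neg at hle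
      have hMj0 : 0 ≤ M j := by omega
      have hMjN : M j ≤ (N : ℤ) := (hMbd j).2
      set s : Fin (N+1) := ⟨(M j).toNat, by omega⟩ with hs
      have hsC : (j, s) ∈ C := (hmemM j s).mpr (by simp [hs]; omega)
      set t : Fin (N+1) := ⟨(M j).toNat - ε - 1, by omega⟩ with ht
      have hgen : genR n N ε (i, t) (j, s) := by
        right
        simp only [hs, ht]
        omega
      have htC : (i, t) ∈ C := hC _ hsC _ (Relation.TransGen.single hgen)
      have := (hmemM i t).mp htC
      simp only [ht] at this
      omega
  · rintro ⟨m, hbd, hsk, hmem⟩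
    have step : ∀ a b : Fin n × Fin (N+1), genR n N ε a b → b ∈ C → a ∈ C := by
      rintro ⟨i, t⟩ ⟨j, s⟩ h hc
      rw [hmem] at hc ⊢
      rcases h with ⟨hij, hts⟩ | h
      · simp only at hij
        subst hij
        have : (t : ℕ) < (s : ℕ) := hts
        omega
      · have h' : (t : ℕ) + ε < (s : ℕ) := h
        have := hsk i j
        omega
    intro e he f hfe
    revert he
    induction hfe with
    | single h => intro he; exact step _ _ h he
    | tail _ h ih => intro he; exact ih (step _ _ h he)
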